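/- Submodularity of the inverse-Laplacian trace objective on non-empty sets: for a graph Laplacian L of a connected graph (rescaled so it is symmetric PSD with kernel spanned by h) and any sets A, B, C ⊆ {1,...,n} with A non-empty, Tr[(L_{A^c,A^c})⁻¹] − Tr[(L_{(A∪B)^c,(A∪B)^c})⁻¹] − Tr[(L_{(A∪C)^c,(A∪C)^c})⁻¹] + Tr[(L_{(A∪B∪C)^c,(A∪B∪C)^c})⁻¹] ≥ 0. -/

import Mathlib

open Matrix BigOperators

/-- The inclusion of the complement of a finite set of indices. -/
def inclC {n : ℕ} (S : Finset (Fin n)) : {x // x ∉ S} → Fin n := fun i => i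

namespace Stmt19

variable {n : ℕ}

lemma sum_compl_eq (S : Finset (Fin n)) (F : Fin n → ℝ) (hF : ∀ i ∈ S, F i = 0) :
    ∑ l : {x // x ∉ S}, F l.1 = ∑ l, F l := by
  rw [← Finset.sum_subtype Sᶜ (fun x => Finset.mem_compl) F]
  exact Finset.sum_subset (Finset.subset_univ _)
    (fun x _ hx => hF x (by simpa using hx))

lemma posdef_diag {m : Type*} [Fintype m] [DecidableEq m] {M : Matrix m m ℝ}
    (hM : M.PosDef) (i : m) : 0 < M i i := by
  have h := hM.dotProduct_mulVec_pos (x := Pi.single i 1) (by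
    intro hc
    have := congrFun hc i
    simp at this)
  simpa [Matrix.mulVec_single, single_dotProduct] using h

lemma inv_entry_nonneg {m : Type*} [Fintype m] [DecidableEq m] {M : Matrix m m ℝ}
    (hM : M.PosDef) (hoff : ∀ i j, i ≠ j → M i j ≤ 0) (i j : m) : 0 ≤ M⁻¹ i j := by
  set x : m → ℝ := fun a => M⁻¹ a j with hxdef
  have hinv : M * M⁻¹ = 1 := Matrix.mul_nonsing_inv M (isUnit_iff_ne_zero.2 hM.det_pos.ne')
  have hMx : M *ᵥ x = Pi.single j 1 := by
    funext a
    have : (M * M⁻¹) a j = (1 : Matrix m m ℝ) a j := by rw [hinv]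
    simpa [Matrix.mulVec, Matrix.mul_apply, dotProduct, Matrix.one_apply,
      Pi.single_apply, eq_comm] using this
  set y : m → ℝ := fun a => max (-(x a)) 0 with hydef
  set z : m → ℝ := fun a => max (x a) 0 with hzdef
  have hy0 : ∀ a, 0 ≤ y a := fun a => le_max_right _ _
  have hz0 : ∀ a, 0 ≤ z a := fun a => le_max_right _ _
  have hyz : ∀ a, y a * z a = 0 := by
    intro a
    rcases le_or_gt (x a) 0 with hx0 | hx0
    · simp [hzdef, max_eq_right hx0]
    · simp [hydef, max_eq_right (by linarith : -(x a) ≤ 0)]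
  have hxyz : ∀ a, x a = z a - y a := by
    intro a
    rcases le_or_gt (x a) 0 with hx0 | hx0
    · simp [hydef, hzdef, max_eq_right hx0, max_eq_left (by linarith : -(x a) ≥ 0)]
    · simp [hydef, hzdef, max_eq_left hx0.le, max_eq_right (by linarith : -(x a) ≤ 0)]
  have hyMz : y ⬝ᵥ (M *ᵥ z) ≤ 0 := by
    unfold dotProduct Matrix.mulVec dotProduct
    apply Finset.sum_nonpos
    intro a _
    rw [Finset.mul_sum]
    apply Finset.sum_nonpos
    intro b _
    rcases eq_or_ne a b with rfl | hab
    · have he : y a * (M a a * z a) = M a a * (y a * z a) := by ring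
      rw [he, hyz a, mul_zero]
    · have h1 := hoff a b hab
      have h2 : M a b * (y a * z b) ≤ 0 :=
        mul_nonpos_of_nonpos_of_nonneg h1 (mul_nonneg (hy0 a) (hz0 b))
      nlinarith [h2]
  have hxv : x = z - y := funext fun a => by simpa using hxyz a
  have hsplit : y ⬝ᵥ (M *ᵥ x) = y ⬝ᵥ (M *ᵥ z) - y ⬝ᵥ (M *ᵥ y) := by
    rw [hxv, Matrix.mulVec_sub, dotProduct_sub]
  have hyj : y ⬝ᵥ (M *ᵥ x) = y j := by
    rw [hMx, dotProduct_single, mul_one]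
  have hyMy : y ⬝ᵥ (M *ᵥ y) ≤ 0 := by
    have : y ⬝ᵥ (M *ᵥ y) = y ⬝ᵥ (M *ᵥ z) - y j := by rw [← hyj, hsplit]; ring
    rw [this]
    have := hy0 j
    linarith
  have hy : y = 0 := by
    by_contra hy
    have := hM.dotProduct_mulVec_pos hy
    rw [star_trivial] at this
    linarith
  have : y j = 0 := by rw [hy]; rfl
  have hxj : 0 ≤ x i := by
    have := hxyz i
    have hyi : y i = 0 := by rw [hy]; rfl
    rw [hyi] at this
    have := hz0 i
    linarith
  exact hxj


section Main

variable {L : Matrix (Fin n) (Fin n) ℝ} {h : Fin n → ℝ}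
variable (hL : L.PosSemidef) (hoff : ∀ i j, i ≠ j → L i j ≤ 0)
variable (hpos : ∀ i, 0 < h i)
variable (hker : ∀ x : Fin n → ℝ, L *ᵥ x = 0 → ∃ c : ℝ, x = c • h)

/-- the extension of a vector on the complement of `S` by zero -/
def extz (S : Finset (Fin n)) (x : {i // i ∉ S} → ℝ) : Fin n → ℝ :=
  fun i => if hi : i ∈ S then 0 else x ⟨i, hi⟩

include hL hpos hker in
lemma subPD (S : Finset (Fin n)) (hS : S.Nonempty) :
    (L.submatrix (inclC S) (inclC S)).PosDef := by
  refine Matrix.PosDef.of_dotProduct_mulVec_pos ?_ ?_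
  · have hsym := hL.1
    ext i j
    have : L j.1 i.1 = L i.1 j.1 := by
      conv_lhs => rw [← hsym]
      simp [Matrix.conjTranspose_apply]
    simpa [Matrix.conjTranspose_apply, Matrix.submatrix_apply, inclC] using this
  · intro x hx
    set xt : Fin n → ℝ := extz S x with hxt
    have hzero : ∀ i ∈ S, xt i = 0 := by
      intro i hi; simp [hxt, extz, hi]
    have hmv : ∀ i : {a // a ∉ S},
        (L *ᵥ xt) i.1 = ((L.submatrix (inclC S) (inclC S)) *ᵥ x) i := by
      intro i
      show (L *ᵥ xt) i.1 = _
      unfold Matrix.mulVec dotProduct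
      rw [← sum_compl_eq S (fun l => L i.1 l * xt l)
        (fun l hl => by simp [hzero l hl])]
      congr 1
      funext l
      simp [hxt, extz, l.2, Matrix.submatrix_apply, inclC]
    have hdot : star x ⬝ᵥ ((L.submatrix (inclC S) (inclC S)) *ᵥ x)
        = star xt ⬝ᵥ (L *ᵥ xt) := by
      rw [star_trivial, star_trivial]
      unfold dotProduct
      rw [← sum_compl_eq S (fun l => xt l * (L *ᵥ xt) l)
        (fun l hl => by simp [hzero l hl])]
      apply Finset.sum_congr rfl
      intro l _
      rw [hmv l]
      congr 1
      simp [hxt, extz, l.2]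
    have hnn : 0 ≤ star x ⬝ᵥ ((L.submatrix (inclC S) (inclC S)) *ᵥ x) := by
      rw [hdot]; exact hL.dotProduct_mulVec_nonneg xt
    rcases lt_or_eq_of_le hnn with hlt | heq
    · exact hlt
    · exfalso
      have hz : L *ᵥ xt = 0 := by
        rw [← hL.dotProduct_mulVec_zero_iff xt, ← hdot, ← heq]
      obtain ⟨c, hc⟩ := hker xt hz
      obtain ⟨s, hs⟩ := hS
      have : xt s = 0 := hzero s hs
      rw [hc] at this
      have hc0 : c = 0 := by
        simp only [Pi.smul_apply, smul_eq_mul] at this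
        rcases mul_eq_zero.1 this with h0 | h0
        · exact h0
        · exact absurd h0 (hpos s).ne'
      apply hx
      funext i
      have : xt i.1 = 0 := by rw [hc, hc0]; simp
      simpa [hxt, extz, i.2] using this

/-- Extended Green function. -/
noncomputable def g (L : Matrix (Fin n) (Fin n) ℝ) (S : Finset (Fin n)) (i j : Fin n) : ℝ :=
  if hi : i ∈ S then 0 else if hj : j ∈ S then 0 else
    (L.submatrix (inclC S) (inclC S))⁻¹ ⟨i, hi⟩ ⟨j, hj⟩

lemma g_zero_left {S : Finset (Fin n)} {i : Fin n} (hi : i ∈ S) (j : Fin n) :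
    g L S i j = 0 := by simp [g, hi]

lemma g_zero_right {S : Finset (Fin n)} {j : Fin n} (hj : j ∈ S) (i : Fin n) :
    g L S i j = 0 := by
  unfold g
  split
  · rfl
  · simp [hj]

lemma g_eq {S : Finset (Fin n)} {i j : Fin n} (hi : i ∉ S) (hj : j ∉ S) :
    g L S i j = (L.submatrix (inclC S) (inclC S))⁻¹ ⟨i, hi⟩ ⟨j, hj⟩ := by
  simp [g, hi, hj]

include hL hpos hker in
lemma g_symm (S : Finset (Fin n)) (hS : S.Nonempty) (i j : Fin n) :
    g L S i j = g L S j i := by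
  by_cases hi : i ∈ S
  · rw [g_zero_left hi, g_zero_right hi]
  by_cases hj : j ∈ S
  · rw [g_zero_right hj, g_zero_left hj]
  rw [g_eq hi hj, g_eq hj hi]
  have hH : ((L.submatrix (inclC S) (inclC S))⁻¹).IsHermitian :=
    ((subPD hL hpos hker S hS).inv).isHermitian
  have := hH.apply ⟨i, hi⟩ ⟨j, hj⟩
  rw [star_trivial] at this
  exact this.symm

include hL hoff hpos hker in
lemma g_nonneg (S : Finset (Fin n)) (hS : S.Nonempty) (i j : Fin n) :
    0 ≤ g L S i j := by
  by_cases hi : i ∈ S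
  · rw [g_zero_left hi]
  by_cases hj : j ∈ S
  · rw [g_zero_right hj]
  rw [g_eq hi hj]
  apply inv_entry_nonneg (subPD hL hpos hker S hS)
  intro a b hab
  have : a.1 ≠ b.1 := fun hc => hab (Subtype.ext hc)
  exact hoff a.1 b.1 this

include hL hpos hker in
lemma g_diag_pos (S : Finset (Fin n)) (hS : S.Nonempty) {k : Fin n} (hk : k ∉ S) :
    0 < g L S k k := by
  rw [g_eq hk hk]
  exact posdef_diag ((subPD hL hpos hker S hS).inv) ⟨k, hk⟩


include hL hpos hker in
lemma g_mulL (S : Finset (Fin n)) (hS : S.Nonempty) {i j : Fin n}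
    (hi : i ∉ S) (hj : j ∉ S) :
    ∑ l, L i l * g L S l j = if i = j then 1 else 0 := by
  have hdet : IsUnit (L.submatrix (inclC S) (inclC S)).det :=
    isUnit_iff_ne_zero.2 (subPD hL hpos hker S hS).det_pos.ne'
  have hinv : (L.submatrix (inclC S) (inclC S)) * (L.submatrix (inclC S) (inclC S))⁻¹ = 1 :=
    Matrix.mul_nonsing_inv _ hdet
  have h1 : ∑ l, L i l * g L S l j
      = ∑ l : {x // x ∉ S}, L i l.1 * g L S l.1 j := by
    rw [sum_compl_eq S (fun l => L i l * g L S l j)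
      (fun l hl => by show L i l * g L S l j = 0; rw [g_zero_left hl, mul_zero])]
  rw [h1]
  have h2 : ∀ l : {x // x ∉ S}, L i l.1 * g L S l.1 j
      = (L.submatrix (inclC S) (inclC S)) ⟨i, hi⟩ l
        * (L.submatrix (inclC S) (inclC S))⁻¹ l ⟨j, hj⟩ := by
    intro l
    rw [g_eq l.2 hj]
    rfl
  rw [Finset.sum_congr rfl (fun l _ => h2 l), ← Matrix.mul_apply, hinv,
    Matrix.one_apply]
  by_cases hij : i = j
  · subst hij; simp
  · rw [if_neg hij, if_neg (fun hc => hij (congrArg Subtype.val hc))]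

include hL hpos hker in
lemma inv_of_ext (S : Finset (Fin n)) (hS : S.Nonempty) (G : Fin n → Fin n → ℝ)
    (hZ : ∀ i j, i ∈ S → G i j = 0)
    (hE : ∀ i j, i ∉ S → j ∉ S → ∑ l, L i l * G l j = if i = j then 1 else 0)
    (i j : Fin n) (hi : i ∉ S) (hj : j ∉ S) :
    (L.submatrix (inclC S) (inclC S))⁻¹ ⟨i, hi⟩ ⟨j, hj⟩ = G i j := by
  have key : (L.submatrix (inclC S) (inclC S))
      * (Matrix.of fun a b : {x // x ∉ S} => G a.1 b.1) = 1 := by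
    ext a b
    rw [Matrix.mul_apply]
    have h1 : ∑ l : {x // x ∉ S},
        (L.submatrix (inclC S) (inclC S)) a l * (Matrix.of fun a b : {x // x ∉ S} => G a.1 b.1) l b
        = ∑ l : {x // x ∉ S}, L a.1 l.1 * G l.1 b.1 := rfl
    rw [h1, sum_compl_eq S (fun l => L a.1 l * G l b.1)
      (fun l hl => by show L a.1 l * G l b.1 = 0; rw [hZ l b.1 hl, mul_zero]),
      hE a.1 b.1 a.2 b.2, Matrix.one_apply]
    by_cases hab : a = b
    · subst hab; simp
    · rw [if_neg (fun hc : a.1 = b.1 => hab (Subtype.ext hc)), if_neg hab]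
  rw [Matrix.inv_eq_right_inv key]
  rfl

include hL hpos hker in
lemma g_insert (S : Finset (Fin n)) (hS : S.Nonempty) {k : Fin n} (hk : k ∉ S)
    (i j : Fin n) :
    g L (insert k S) i j = g L S i j - g L S i k * g L S k j / g L S k k := by
  have hkk : 0 < g L S k k := g_diag_pos hL hpos hker S hS hk
  -- the candidate extended inverse
  set G : Fin n → Fin n → ℝ :=
    fun a b => g L S a b - g L S a k * g L S k b / g L S k k with hG
  have hZ : ∀ a b, a ∈ insert k S → G a b = 0 := by
    intro a b ha
    rcases Finset.mem_insert.1 ha with rfl | ha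
    · simp only [hG]
      rw [mul_comm, mul_div_assoc, div_self hkk.ne', mul_one, sub_self]
    · simp only [hG, g_zero_left ha]
      simp
  have hZright : ∀ a b, b ∈ insert k S → G a b = 0 := by
    intro a b hb
    rcases Finset.mem_insert.1 hb with rfl | hb
    · simp only [hG]
      rw [mul_div_assoc, div_self hkk.ne', mul_one, sub_self]
    · simp only [hG, g_zero_right hb]
      simp
  by_cases hi : i ∈ insert k S
  · rw [g_zero_left hi]; exact (hZ i j hi).symm
  by_cases hj : j ∈ insert k S
  · rw [g_zero_right hj]; exact (hZright i j hj).symm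
  have hiS : i ∉ S := fun hc => hi (Finset.mem_insert_of_mem hc)
  have hjS : j ∉ S := fun hc => hj (Finset.mem_insert_of_mem hc)
  have hik : i ≠ k := fun hc => hi (hc ▸ Finset.mem_insert_self k S)
  have hE : ∀ a b, a ∉ insert k S → b ∉ insert k S →
      ∑ l, L a l * G l b = if a = b then 1 else 0 := by
    intro a b ha hb
    have haS : a ∉ S := fun hc => ha (Finset.mem_insert_of_mem hc)
    have hbS : b ∉ S := fun hc => hb (Finset.mem_insert_of_mem hc)
    have hak : a ≠ k := fun hc => ha (hc ▸ Finset.mem_insert_self k S)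
    have hsplit : ∑ l, L a l * G l b
        = (∑ l, L a l * g L S l b)
          - (∑ l, L a l * g L S l k) * (g L S k b / g L S k k) := by
      rw [Finset.sum_mul, ← Finset.sum_sub_distrib]
      apply Finset.sum_congr rfl
      intro l _
      simp only [hG]
      ring
    rw [hsplit, g_mulL hL hpos hker S hS haS hbS, g_mulL hL hpos hker S hS haS hk]
    simp [hak]
  have := inv_of_ext hL hpos hker (insert k S) (hS.mono (Finset.subset_insert k S))
    G hZ hE i j hi hj
  rw [g_eq hi hj, this]


lemma arith (A Bb c0 ai aj bi bj : ℝ) (hA : 0 < A) (hB : 0 < Bb)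
    (hG : 0 < A * Bb - c0 ^ 2) (hc0 : 0 ≤ c0) (hai : 0 ≤ ai) (hbi : 0 ≤ bi)
    (hPj : 0 ≤ aj * Bb - bj * c0) (hQj : 0 ≤ bj * A - aj * c0) :
    (ai * Bb - bi * c0) * (aj * Bb - bj * c0) * A ≤ ai * aj * (A * Bb - c0 ^ 2) * Bb := by
  nlinarith [mul_nonneg (mul_nonneg (mul_nonneg hc0 hB.le) hai) hQj,
    mul_nonneg (mul_nonneg (mul_nonneg hc0 hA.le) hbi) hPj]

include hL hoff hpos hker in
lemma step_nonneg (S : Finset (Fin n)) (hS : S.Nonempty) (k i j : Fin n) :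
    0 ≤ g L S i j - g L (insert k S) i j := by
  by_cases hk : k ∈ S
  · rw [Finset.insert_eq_self.2 hk, sub_self]
  rw [g_insert hL hpos hker S hS hk, sub_sub_cancel]
  exact div_nonneg (mul_nonneg (g_nonneg hL hoff hpos hker S hS i k)
    (g_nonneg hL hoff hpos hker S hS k j)) (g_diag_pos hL hpos hker S hS hk).le

include hL hoff hpos hker in
lemma two_point (S : Finset (Fin n)) (hS : S.Nonempty) (k c i j : Fin n) :
    g L (insert c S) i j - g L (insert k (insert c S)) i j
      ≤ g L S i j - g L (insert k S) i j := by
  by_cases hk : k ∈ S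
  · rw [Finset.insert_eq_self.2 hk, sub_self,
      Finset.insert_eq_self.2 (Finset.mem_insert_of_mem hk), sub_self]
  by_cases hc : c ∈ S
  · rw [Finset.insert_eq_self.2 hc]
  by_cases hkc : k = c
  · subst hkc
    rw [Finset.insert_idem, sub_self]
    exact step_nonneg hL hoff hpos hker S hS k i j
  -- main case
  have hScne : (insert c S).Nonempty := hS.mono (Finset.subset_insert c S)
  have hkc' : k ∉ insert c S := by
    simp [Finset.mem_insert, hkc, hk]
  set αa := g L S k k with hαa
  set βb := g L S c c with hβb
  set c0 := g L S k c with hc0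
  set αi := g L S i k with hαi
  set αj := g L S j k with hαj
  set βi := g L S i c with hβi
  set βj := g L S j c with hβj
  have gnn := g_nonneg hL hoff hpos hker S hS
  have gnnC := g_nonneg hL hoff hpos hker (insert c S) hScne
  have gnnK := g_nonneg hL hoff hpos hker (insert k S) (hS.mono (Finset.subset_insert k S))
  have hsym := g_symm hL hpos hker S hS
  have hA : 0 < αa := g_diag_pos hL hpos hker S hS hk
  have hB : 0 < βb := g_diag_pos hL hpos hker S hS hc
  -- rewrite both sides using g_insert
  have e1 : g L S i j - g L (insert k S) i j = αi * αj / αa := by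
    rw [g_insert hL hpos hker S hS hk, sub_sub_cancel, hsym k j]
  have eik : g L (insert c S) i k = αi - βi * c0 / βb := by
    rw [g_insert hL hpos hker S hS hc, hsym c k]
  have ekj : g L (insert c S) k j = αj - βj * c0 / βb := by
    rw [g_insert hL hpos hker S hS hc, hsym k j, hsym c j]
    ring
  have ekk : g L (insert c S) k k = αa - c0 ^ 2 / βb := by
    rw [g_insert hL hpos hker S hS hc, hsym c k]
    ring
  have hGpos : 0 < αa - c0 ^ 2 / βb := by
    rw [← ekk]
    exact g_diag_pos hL hpos hker (insert c S) hScne hkc'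
  have e2 : g L (insert c S) i j - g L (insert k (insert c S)) i j
      = (αi - βi * c0 / βb) * (αj - βj * c0 / βb) / (αa - c0 ^ 2 / βb) := by
    rw [g_insert hL hpos hker (insert c S) hScne hkc', sub_sub_cancel, eik, ekj, ekk]
  rw [e1, e2]
  -- nonnegativity side facts
  have hPi : 0 ≤ αi - βi * c0 / βb := by rw [← eik]; exact gnnC i k
  have hPj : 0 ≤ αj - βj * c0 / βb := by rw [← ekj]; exact gnnC k j
  have hQj : 0 ≤ βj - αj * c0 / αa := by
    have h0 := gnnK j c
    rw [g_insert hL hpos hker S hS hk] at h0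
    simp only [← hαa, ← hαj, ← hβj, ← hc0] at h0
    exact h0
  have hc0nn : 0 ≤ c0 := gnn k c
  have hai : 0 ≤ αi := gnn i k
  have haj : 0 ≤ αj := gnn j k
  have hbi : 0 ≤ βi := gnn i c
  have hbj : 0 ≤ βj := gnn j c
  -- clear denominators
  have hGpos' : 0 < αa * βb - c0 ^ 2 := by
    have : αa - c0 ^ 2 / βb = (αa * βb - c0 ^ 2) / βb := by field_simp
    rw [this] at hGpos
    exact (div_pos_iff.1 hGpos).resolve_right (fun hcon => absurd hB (not_lt.2 hcon.2.le)) |>.1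
  have hPj' : 0 ≤ αj * βb - βj * c0 := by
    have h1 := mul_nonneg hB.le hPj
    have h2 : βb * (αj - βj * c0 / βb) = αj * βb - βj * c0 := by
      field_simp [hB.ne']
      try ring
    rwa [h2] at h1
  have hQj' : 0 ≤ βj * αa - αj * c0 := by
    have h1 := mul_nonneg hA.le hQj
    have h2 : αa * (βj - αj * c0 / αa) = βj * αa - αj * c0 := by
      field_simp [hA.ne']
      try ring
    rwa [h2] at h1
  have key := arith αa βb c0 αi αj βi βj hA hB hGpos' hc0nn hai hbi hPj' hQj'
  rw [div_le_div_iff₀ hGpos hA]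
  have expand : (αi - βi * c0 / βb) * (αj - βj * c0 / βb) * αa
      = ((αi * βb - βi * c0) * (αj * βb - βj * c0) * αa) / (βb ^ 2) := by
    field_simp [hB.ne']
    try ring
    try exact Or.inl trivial
  have expand2 : αi * αj * (αa - c0 ^ 2 / βb)
      = (αi * αj * (αa * βb - c0 ^ 2) * βb) / (βb ^ 2) := by
    field_simp [hB.ne']
    try ring
    try exact Or.inl trivial
  rw [expand, expand2]
  gcongr


include hL hoff hpos hker in
lemma d_union (S : Finset (Fin n)) (hS : S.Nonempty) (C : Finset (Fin n))
    (k i j : Fin n) :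
    g L (S ∪ C) i j - g L (insert k (S ∪ C)) i j
      ≤ g L S i j - g L (insert k S) i j := by
  induction C using Finset.induction_on with
  | empty => rw [Finset.union_empty]
  | @insert c C hcC ih =>
    rw [Finset.union_insert]
    calc g L (insert c (S ∪ C)) i j - g L (insert k (insert c (S ∪ C))) i j
        ≤ g L (S ∪ C) i j - g L (insert k (S ∪ C)) i j :=
          two_point hL hoff hpos hker (S ∪ C) (hS.mono Finset.subset_union_left) k c i j
      _ ≤ _ := ih

include hL hoff hpos hker in
lemma quad (S : Finset (Fin n)) (hS : S.Nonempty) (B C : Finset (Fin n)) (i j : Fin n) :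
    0 ≤ g L S i j - g L (S ∪ B) i j - g L (S ∪ C) i j + g L (S ∪ B ∪ C) i j := by
  induction B using Finset.induction_on with
  | empty => rw [Finset.union_empty]; ring_nf; simp
  | @insert k B hkB ih =>
    have h1 : S ∪ insert k B = insert k (S ∪ B) := Finset.union_insert k S B
    rw [h1]
    have h2 : insert k (S ∪ B) ∪ C = insert k (S ∪ B ∪ C) := Finset.insert_union k (S ∪ B) C
    rw [h2]
    have h3 := d_union hL hoff hpos hker (S ∪ B)
      (hS.mono Finset.subset_union_left) C k i j
    rw [Finset.union_assoc] at h3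
    rw [Finset.union_assoc] at ih ⊢
    linarith

lemma trace_eq (S : Finset (Fin n)) :
    ((L.submatrix (inclC S) (inclC S))⁻¹).trace = ∑ i, g L S i i := by
  rw [Matrix.trace]
  rw [← sum_compl_eq S (fun i => g L S i i) (fun i hi => g_zero_left hi i)]
  apply Finset.sum_congr rfl
  intro l _
  simp [Matrix.diag, g_eq l.2 l.2]

end Main

end Stmt19


open Stmt19

/-- Submodularity of the inverse-Laplacian trace objective on non-empty sets: for a
rescaled graph Laplacian `L` of a connected graph (symmetric PSD, nonpositive
off-diagonal entries, kernel spanned by the entrywise positive vector `h`) and any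
sets `A, B, C` of indices with `A` non-empty,
`Tr[(L_{Aᶜ,Aᶜ})⁻¹] − Tr[(L_{(A∪B)ᶜ,(A∪B)ᶜ})⁻¹] − Tr[(L_{(A∪C)ᶜ,(A∪C)ᶜ})⁻¹]
  + Tr[(L_{(A∪B∪C)ᶜ,(A∪B∪C)ᶜ})⁻¹]` ≥ 0`. -/
theorem stmt_19 (n : ℕ) (L : Matrix (Fin n) (Fin n) ℝ) (h : Fin n → ℝ)
    (hL : L.PosSemidef) (hoff : ∀ i j, i ≠ j → L i j ≤ 0)
    (hpos : ∀ i, 0 < h i) (hLh : L *ᵥ h = 0)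
    (hker : ∀ x : Fin n → ℝ, L *ᵥ x = 0 → ∃ c : ℝ, x = c • h)
    (A B C : Finset (Fin n)) (hA : A.Nonempty) :
    0 ≤ ((L.submatrix (inclC A) (inclC A))⁻¹).trace
        - ((L.submatrix (inclC (A ∪ B)) (inclC (A ∪ B)))⁻¹).trace
        - ((L.submatrix (inclC (A ∪ C)) (inclC (A ∪ C)))⁻¹).trace
        + ((L.submatrix (inclC (A ∪ B ∪ C)) (inclC (A ∪ B ∪ C)))⁻¹).trace := by
  rw [trace_eq A, trace_eq (A ∪ B), trace_eq (A ∪ C), trace_eq (A ∪ B ∪ C)]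
  have key : ∀ i, 0 ≤ g L A i i - g L (A ∪ B) i i - g L (A ∪ C) i i + g L (A ∪ B ∪ C) i i :=
    fun i => quad hL hoff hpos hker A hA B C i i
  have := Finset.sum_nonneg (fun i (_ : i ∈ Finset.univ) => key i)
  calc (0:ℝ) ≤ ∑ i, (g L A i i - g L (A ∪ B) i i - g L (A ∪ C) i i + g L (A ∪ B ∪ C) i i) := this
    _ = (∑ i, g L A i i) - (∑ i, g L (A ∪ B) i i) - (∑ i, g L (A ∪ C) i i)
        + (∑ i, g L (A ∪ B ∪ C) i i) := by
      rw [Finset.sum_add_distrib, Finset.sum_sub_distrib, Finset.sum_sub_distrib]
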